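/- Assume additionally that E i j holds for all distinct i, j ∈ {1,…,n}. For n < j ≤ d set S_j = s_j · s_1^{a_{j,1}} ⋯ s_n^{a_{j,n}} ∈ W(E), and for t ∈ (ZMod 2)^n set w_t = s_1^{t_1} ⋯ s_n^{t_n} (exponents in ZMod 2 interpreted as 0 or 1, so w_t = w_t^{−1}). Then ker φ is generated, as a subgroup of W(E), by the set { w_t · S_j · w_t : n+1 ≤ j ≤ d, t ∈ (ZMod 2)^n }. -/

import Mathlib

/-- Relators of the right-angled Coxeter group of the graph `E`:
`s j ^ 2` for every vertex `j`, and `(s i * s j) ^ 2` for every edge `{i, j}` of `E`. -/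
def racgRels {d : ℕ} (E : Fin d → Fin d → Prop) : Set (FreeGroup (Fin d)) :=
  {r | (∃ j : Fin d, r = FreeGroup.of j ^ 2) ∨
    ∃ i j : Fin d, E i j ∧ r = (FreeGroup.of i * FreeGroup.of j) ^ 2}

/-- The right-angled Coxeter group `W(E)` of the graph `E`. -/
abbrev RACG {d : ℕ} (E : Fin d → Fin d → Prop) : Type := PresentedGroup (racgRels E)

/-- The standard generator `s j` of the right-angled Coxeter group `W(E)`. -/
def racgGen {d : ℕ} (E : Fin d → Fin d → Prop) (j : Fin d) : RACG E :=
  PresentedGroup.of j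

namespace Stmt8Aux

variable {d : ℕ} {E : Fin d → Fin d → Prop}

lemma rel_one {r : FreeGroup (Fin d)} (hr : r ∈ racgRels E) :
    PresentedGroup.mk (racgRels E) r = 1 :=
  (QuotientGroup.eq_one_iff r).mpr (Subgroup.subset_normalClosure hr)

lemma gen_sq (j : Fin d) : racgGen E j ^ 2 = 1 := by
  have : racgGen E j ^ 2 = PresentedGroup.mk (racgRels E) (FreeGroup.of j ^ 2) := by
    rw [map_pow]; rfl
  rw [this]; exact rel_one (Or.inl ⟨j, rfl⟩)

lemma gen_inv (j : Fin d) : (racgGen E j)⁻¹ = racgGen E j := by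
  rw [inv_eq_iff_mul_eq_one, ← sq]; exact gen_sq j

lemma gen_comm {i j : Fin d} (h : E i j) : Commute (racgGen E i) (racgGen E j) := by
  have h1 : (racgGen E i * racgGen E j) ^ 2 = 1 := by
    have : (racgGen E i * racgGen E j) ^ 2
        = PresentedGroup.mk (racgRels E) ((FreeGroup.of i * FreeGroup.of j) ^ 2) := by
      rw [map_pow, map_mul]; rfl
    rw [this]; exact rel_one (Or.inr ⟨i, j, h, rfl⟩)
  have h2 : racgGen E i * racgGen E j = (racgGen E i * racgGen E j)⁻¹ :=
    eq_inv_of_mul_eq_one_left (by rw [← sq]; exact h1)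
  unfold Commute SemiconjBy
  rw [h2, mul_inv_rev, gen_inv, gen_inv]

lemma pow_mod_two {G : Type*} [Monoid G] {s : G} (hs : s ^ 2 = 1) (m : ℕ) :
    s ^ (m % 2) = s ^ m := by
  conv_rhs => rw [← Nat.div_add_mod m 2, pow_add, pow_mul, hs, one_pow, one_mul]

lemma list_prod_mul {ι G : Type*} [Monoid G] :
    ∀ (L : List ι) (f g : ι → G), L.Pairwise (fun i j => Commute (g i) (f j)) →
      (L.map f).prod * (L.map g).prod = (L.map (fun i => f i * g i)).prod := by
  intro L
  induction L with
  | nil => simp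
  | cons a L ih =>
    intro f g h
    rw [List.pairwise_cons] at h
    have hswap : Commute (g a) (L.map f).prod :=
      Commute.list_prod_right _ _ (by
        intro x hx
        obtain ⟨i, hi, rfl⟩ := List.mem_map.1 hx
        exact h.1 i hi)
    simp only [List.map_cons, List.prod_cons]
    rw [← ih f g h.2, mul_assoc, ← mul_assoc (L.map f).prod, ← hswap.eq]
    group

lemma list_prod_single {ι G : Type*} [Monoid G] (k : ι) :
    ∀ (L : List ι) (f : ι → G), (∀ i ∈ L, i ≠ k → f i = 1) → k ∈ L → L.Nodup →
      (L.map f).prod = f k := by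
  intro L
  induction L with
  | nil => simp
  | cons a L ih =>
    intro f hf hk hnd
    rw [List.nodup_cons] at hnd
    simp only [List.map_cons, List.prod_cons]
    rcases eq_or_ne a k with rfl | hak
    · have : (L.map f).prod = 1 := by
        apply List.prod_eq_one
        intro x hx
        obtain ⟨i, hi, rfl⟩ := List.mem_map.1 hx
        exact hf i (List.mem_cons_of_mem _ hi) (fun h => hnd.1 (h ▸ hi))
      rw [this, mul_one]
    · have hkL : k ∈ L := by
        rcases List.mem_cons.1 hk with h | h
        · exact absurd h.symm hak
        · exact h
      rw [hf a List.mem_cons_self hak, one_mul]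
      exact ih f (fun i hi => hf i (List.mem_cons_of_mem _ hi)) hkL hnd.2

section W

variable (E) {n : ℕ} (hnd : n ≤ d)

/-- `w t = s_1^{t_1} ⋯ s_n^{t_n}`. -/
def w (t : Fin n → ZMod 2) : RACG E :=
  ((List.finRange n).map (fun i => racgGen E (Fin.castLE hnd i) ^ ZMod.val (t i))).prod

variable {E}
variable (hEn : ∀ i j : Fin d, i.val < n → j.val < n → i ≠ j → E i j)
include hEn

lemma w_pairwise (f g : Fin n → RACG E) (hf : ∀ i, ∃ m, f i = racgGen E (Fin.castLE hnd i) ^ m)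
    (hg : ∀ i, ∃ m, g i = racgGen E (Fin.castLE hnd i) ^ m) :
    (List.finRange n).Pairwise (fun i j => Commute (g i) (f j)) := by
  refine (List.pairwise_lt_finRange n).imp ?_
  intro i j hij
  obtain ⟨m1, h1⟩ := hg i
  obtain ⟨m2, h2⟩ := hf j
  rw [h1, h2]
  exact ((gen_comm (hEn _ _ (by simpa using i.isLt) (by simpa using j.isLt)
    (by simp only [ne_eq, Fin.ext_iff, Fin.coe_castLE]; exact Nat.ne_of_lt hij))).pow_pow _ _)

lemma w_mul (t u : Fin n → ZMod 2) : w E hnd t * w E hnd u = w E hnd (t + u) := by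
  unfold w
  rw [list_prod_mul _ _ _ (w_pairwise hnd hEn _ _ (fun i => ⟨_, rfl⟩) (fun i => ⟨_, rfl⟩))]
  congr 1
  apply List.map_congr_left
  intro i _
  rw [← pow_add, Pi.add_apply, ZMod.val_add, pow_mod_two (gen_sq _)]

omit hEn in
lemma w_zero : w E hnd (0 : Fin n → ZMod 2) = 1 := by
  unfold w
  apply List.prod_eq_one
  intro x hx
  obtain ⟨i, _, rfl⟩ := List.mem_map.1 hx
  simp [ZMod.val_zero]

lemma w_self_mul (t : Fin n → ZMod 2) : w E hnd t * w E hnd t = 1 := by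
  rw [w_mul hnd hEn]
  have : t + t = 0 := by
    funext i
    exact CharTwo.add_self_eq_zero (t i)
  rw [this, w_zero]

lemma w_inv (t : Fin n → ZMod 2) : (w E hnd t)⁻¹ = w E hnd t :=
  inv_eq_of_mul_eq_one_right (w_self_mul hnd hEn t)

omit hEn in
lemma w_single (k : Fin n) : w E hnd (Pi.single k 1) = racgGen E (Fin.castLE hnd k) := by
  unfold w
  rw [list_prod_single k _ _ ?_ (List.mem_finRange k) (List.nodup_finRange n)]
  · rw [Pi.single_eq_same]
    norm_num [ZMod.val_one]
  · intro i _ hik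
    rw [Pi.single_eq_of_ne hik, ZMod.val_zero, pow_zero]

end W

end Stmt8Aux

open Stmt8Aux in
/-- Assuming `E i j` for all distinct `i, j ∈ {1,…,n}`, the kernel of `φ` is generated,
as a subgroup of `W(E)`, by the elements `w_t * S_j * w_t` where, for `n < j ≤ d` and
`t ∈ (ℤ/2)^n`, `S_j = s_j * s_1^{a_{j,1}} ⋯ s_n^{a_{j,n}}` and
`w_t = s_1^{t_1} ⋯ s_n^{t_n}`. -/
theorem stmt_8 {d : ℕ} (hd : 1 ≤ d) (E : Fin d → Fin d → Prop)
    (hsymm : ∀ i j, E i j → E j i) (hirr : ∀ i, ¬ E i i)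
    (n : ℕ) (hn : 1 ≤ n) (hnd : n ≤ d)
    (a : Fin d → Fin n → ZMod 2)
    (ha : ∀ (i : Fin d) (h : i.val < n), a i = Pi.single (⟨i.val, h⟩ : Fin n) 1)
    (φ : RACG E →* Multiplicative (Fin n → ZMod 2))
    (hφ : ∀ j : Fin d, φ (racgGen E j) = Multiplicative.ofAdd (a j))
    (hEn : ∀ i j : Fin d, i.val < n → j.val < n → i ≠ j → E i j) :
    φ.ker = Subgroup.closure
      {x : RACG E | ∃ j : Fin d, n ≤ j.val ∧ ∃ t : Fin n → ZMod 2,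
        x = ((List.finRange n).map
              (fun i => racgGen E (Fin.castLE hnd i) ^ ZMod.val (t i))).prod *
            (racgGen E j *
              ((List.finRange n).map
                (fun i => racgGen E (Fin.castLE hnd i) ^ ZMod.val (a j i))).prod) *
            ((List.finRange n).map
              (fun i => racgGen E (Fin.castLE hnd i) ^ ZMod.val (t i))).prod} := by
  show φ.ker = Subgroup.closure
      {x : RACG E | ∃ j : Fin d, n ≤ j.val ∧ ∃ t : Fin n → ZMod 2,
        x = w E hnd t * (racgGen E j * w E hnd (a j)) * w E hnd t}
  set S : Set (RACG E) := {x : RACG E | ∃ j : Fin d, n ≤ j.val ∧ ∃ t : Fin n → ZMod 2,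
        x = w E hnd t * (racgGen E j * w E hnd (a j)) * w E hnd t} with hSdef
  set N : Subgroup (RACG E) := Subgroup.closure S with hNdef
  -- φ applied to w
  have hφw : ∀ t : Fin n → ZMod 2, φ (w E hnd t) = Multiplicative.ofAdd t := by
    intro t
    unfold w
    rw [map_list_prod, List.map_map]
    have hent : ∀ i ∈ List.finRange n,
        (⇑φ ∘ fun i => racgGen E (Fin.castLE hnd i) ^ ZMod.val (t i)) i
          = Multiplicative.ofAdd (ZMod.val (t i) • Pi.single i (1 : ZMod 2)) := by
      intro i _
      have hcast : (⟨(Fin.castLE hnd i).val, by simpa using i.isLt⟩ : Fin n) = i :=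
        Fin.ext rfl
      simp only [Function.comp_apply, map_pow, hφ, ha (Fin.castLE hnd i) (by simpa using i.isLt),
        hcast]
      rw [← ofAdd_nsmul]
    rw [List.map_congr_left hent, ← Fin.prod_univ_def]
    have hsum : ∑ i : Fin n, ZMod.val (t i) • Pi.single i (1 : ZMod 2) = t := by
      funext k
      rw [Finset.sum_apply]
      have : ∀ i : Fin n, (ZMod.val (t i) • Pi.single i (1 : ZMod 2) : Fin n → ZMod 2) k
          = if k = i then (ZMod.val (t i) : ZMod 2) else 0 := by
        intro i
        rcases eq_or_ne k i with rfl | h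
        · simp [Pi.single_eq_same, nsmul_eq_mul]
        · simp [Pi.single_eq_of_ne h, h]
      rw [Finset.sum_congr rfl (fun i _ => this i)]
      rw [Finset.sum_ite_eq Finset.univ k (fun i => (ZMod.val (t i) : ZMod 2))]
      simp [ZMod.natCast_val, ZMod.cast_id]
    rw [← ofAdd_sum, hsum]
  -- closure ≤ ker
  have hNker : N ≤ φ.ker := by
    rw [hNdef, Subgroup.closure_le]
    rintro x ⟨j, hj, t, rfl⟩
    simp only [SetLike.mem_coe, MonoidHom.mem_ker]
    rw [map_mul, map_mul, map_mul, hφw, hφw, hφ, ← ofAdd_add, ← ofAdd_add, ← ofAdd_add]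
    have h2 : ∀ v : Fin n → ZMod 2, v + v = 0 := fun v => funext fun i =>
      CharTwo.add_self_eq_zero (v i)
    rw [h2, add_zero, h2, ofAdd_zero]
  -- conjugation of S by generators lands in N
  have hSsub : S ⊆ N := Subgroup.subset_closure
  have hkey : ∀ k : Fin d, ∀ x ∈ S, racgGen E k * x * racgGen E k ∈ N := by
    rintro k x ⟨j, hj, t, rfl⟩
    by_cases hk : k.val < n
    · have hks : racgGen E k = w E hnd (Pi.single ⟨k.val, hk⟩ 1) := by
        rw [w_single]
        exact congrArg (racgGen E) (Fin.ext rfl)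
      apply hSsub
      refine ⟨j, hj, Pi.single ⟨k.val, hk⟩ 1 + t, ?_⟩
      rw [hks]
      simp only [← mul_assoc]
      rw [w_mul hnd hEn, mul_assoc _ (w E hnd t) (w E hnd (Pi.single ⟨k.val, hk⟩ 1)),
        w_mul hnd hEn, add_comm t (Pi.single ⟨k.val, hk⟩ 1)]
    · push_neg at hk
      set Sk := racgGen E k * w E hnd (a k) with hSkdef
      set Tk := w E hnd (a k) * racgGen E k with hTkdef
      have hak1 : racgGen E k = Sk * w E hnd (a k) := by
        rw [hSkdef, mul_assoc, w_self_mul hnd hEn, mul_one]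
      have hak2 : racgGen E k = w E hnd (a k) * Tk := by
        rw [hTkdef, ← mul_assoc, w_self_mul hnd hEn, one_mul]
      have hSkS : Sk ∈ S := ⟨k, hk, 0, by rw [w_zero, one_mul, mul_one]⟩
      have hTkS : Tk ∈ S := ⟨k, hk, a k, by
        rw [hTkdef]
        simp only [mul_assoc]
        rw [w_self_mul hnd hEn, mul_one]⟩
      have hmidS : w E hnd (a k + t) * (racgGen E j * w E hnd (a j)) * w E hnd (a k + t) ∈ S :=
        ⟨j, hj, a k + t, rfl⟩
      have heq : racgGen E k *
            (w E hnd t * (racgGen E j * w E hnd (a j)) * w E hnd t) * racgGen E k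
          = Sk * (w E hnd (a k + t) * (racgGen E j * w E hnd (a j)) * w E hnd (a k + t)) * Tk := by
        nth_rewrite 2 [hak2]
        nth_rewrite 1 [hak1]
        simp only [← mul_assoc]
        rw [mul_assoc Sk (w E hnd (a k)) (w E hnd t), w_mul hnd hEn,
          mul_assoc _ (w E hnd t) (w E hnd (a k)), w_mul hnd hEn, add_comm t (a k)]
      rw [heq]
      exact Subgroup.mul_mem _ (Subgroup.mul_mem _ (hSsub hSkS) (hSsub hmidS)) (hSsub hTkS)
  -- conjugation of N by generators lands in N
  have hkk : ∀ k : Fin d, racgGen E k * racgGen E k = 1 := by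
    intro k; rw [← sq]; exact gen_sq k
  have hconjN : ∀ k : Fin d, ∀ x ∈ N, racgGen E k * x * racgGen E k ∈ N := by
    intro k x hx
    refine Subgroup.closure_induction (fun y hy => hkey k y hy) ?_ ?_ ?_ hx
    · rw [mul_one, hkk]; exact one_mem N
    · intro y z _ _ hy hz
      have : racgGen E k * (y * z) * racgGen E k
          = (racgGen E k * y * racgGen E k) * (racgGen E k * z * racgGen E k) := by
        simp only [mul_assoc]
        rw [← mul_assoc (racgGen E k) (racgGen E k) (z * racgGen E k), hkk, one_mul]
      rw [this]
      exact Subgroup.mul_mem _ hy hz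
    · intro y _ hy
      have : racgGen E k * y⁻¹ * racgGen E k = (racgGen E k * y * racgGen E k)⁻¹ := by
        rw [mul_inv_rev, mul_inv_rev, gen_inv, mul_assoc]
      rw [this]
      exact Subgroup.inv_mem _ hy
  -- N is normal
  have hNormal : N.Normal := by
    set H : Subgroup (RACG E) :=
      { carrier := {g : RACG E | ∀ x ∈ N, g * x * g⁻¹ ∈ N ∧ g⁻¹ * x * g ∈ N}
        one_mem' := by
          intro x hx
          refine ⟨?_, ?_⟩ <;> simpa using hx
        mul_mem' := by
          intro p q hp hq x hx
          constructor
          · have h2 := (hp _ ((hq x hx).1)).1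
            rw [mul_inv_rev]
            have he : p * q * x * (q⁻¹ * p⁻¹) = p * (q * x * q⁻¹) * p⁻¹ := by group
            rw [he]; exact h2
          · have h2 := (hq _ ((hp x hx).2)).2
            rw [mul_inv_rev]
            have he : q⁻¹ * p⁻¹ * x * (p * q) = q⁻¹ * (p⁻¹ * x * p) * q := by group
            rw [he]; exact h2
        inv_mem' := by
          intro p hp x hx
          rw [inv_inv]
          exact ⟨(hp x hx).2, (hp x hx).1⟩ } with hHdef
    have hmemH : ∀ g : RACG E, g ∈ H ↔ ∀ x ∈ N, g * x * g⁻¹ ∈ N ∧ g⁻¹ * x * g ∈ N :=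
      fun g => Iff.rfl
    have hgen : ∀ j : Fin d, PresentedGroup.of (rels := racgRels E) j ∈ H := by
      intro j
      refine (hmemH _).mpr ?_
      intro x hx
      have h := hconjN j x hx
      show racgGen E j * x * (racgGen E j)⁻¹ ∈ N ∧ (racgGen E j)⁻¹ * x * racgGen E j ∈ N
      rw [gen_inv]
      exact ⟨h, h⟩
    have hall : ∀ g : RACG E, g ∈ H := fun g => PresentedGroup.generated_by _ H hgen g
    exact ⟨fun x hx g => (((hmemH g).mp (hall g)) x hx).1⟩
  haveI : N.Normal := hNormal
  set π : RACG E →* RACG E ⧸ N := QuotientGroup.mk' N with hπdef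
  have hπker : ∀ x : RACG E, x ∈ N → π x = 1 := by
    intro x hx
    exact (QuotientGroup.eq_one_iff x).mpr hx
  set φbar : RACG E ⧸ N →* Multiplicative (Fin n → ZMod 2) :=
    QuotientGroup.lift N φ (fun x hx => hNker hx) with hφbardef
  have hφbarπ : ∀ x : RACG E, φbar (π x) = φ x := fun x => rfl
  set σ : Multiplicative (Fin n → ZMod 2) →* RACG E ⧸ N :=
    MonoidHom.mk' (fun t => π (w E hnd t.toAdd)) (by
      intro t u
      show π (w E hnd (Multiplicative.toAdd (t * u)))
        = π (w E hnd (Multiplicative.toAdd t)) * π (w E hnd (Multiplicative.toAdd u))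
      rw [← map_mul, w_mul hnd hEn, toAdd_mul]) with hσdef
  have hrange : ∀ g : RACG E, π g ∈ σ.range := by
    intro g
    refine PresentedGroup.generated_by _ (σ.range.comap π) ?_ g
    intro j
    simp only [Subgroup.mem_comap]
    by_cases hjn : j.val < n
    · refine ⟨Multiplicative.ofAdd (Pi.single ⟨j.val, hjn⟩ 1), ?_⟩
      show π (w E hnd (Multiplicative.toAdd (Multiplicative.ofAdd
        (Pi.single (⟨j.val, hjn⟩ : Fin n) 1)))) = _
      rw [toAdd_ofAdd, w_single]
      exact congrArg (⇑π) (congrArg (racgGen E) (Fin.ext rfl))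
    · push_neg at hjn
      have hSj : racgGen E j * w E hnd (a j) ∈ N :=
        hSsub ⟨j, hjn, 0, by rw [w_zero, one_mul, mul_one]⟩
      refine ⟨Multiplicative.ofAdd (a j), ?_⟩
      show π (w E hnd (Multiplicative.toAdd (Multiplicative.ofAdd (a j)))) = _
      rw [toAdd_ofAdd]
      have h1 : racgGen E j = (racgGen E j * w E hnd (a j)) * w E hnd (a j) := by
        rw [mul_assoc, w_self_mul hnd hEn, mul_one]
      show π (w E hnd (a j)) = π (racgGen E j)
      rw [h1, map_mul, hπker _ hSj, one_mul]
  have hσφ : ∀ t, φbar (σ t) = t := by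
    intro t
    show φbar (π (w E hnd t.toAdd)) = t
    rw [hφbarπ, hφw, ofAdd_toAdd]
  refine le_antisymm ?_ hNker
  intro x hx
  obtain ⟨t, ht⟩ := hrange x
  have h1 : φbar (π x) = 1 := by rw [hφbarπ]; exact hx
  have ht1 : t = 1 := by rw [← hσφ t, ht, h1]
  have hπx : π x = 1 := by rw [← ht, ht1, map_one]
  exact (QuotientGroup.eq_one_iff x).mp hπx
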